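/- Let d ≥ 1 and let t : E^d → [0,∞) be a weight configuration on the nearest-neighbor edges of ℤ^d such that for every n ≥ 1 there exists a self-avoiding geodesic from 0 to n·e₁, that is, a self-avoiding path attaining T(0, n·e₁). Then there exists an infinite geodesic ray from 0: an infinite self-avoiding nearest-neighbor path 0 = γ_0, γ_1, γ_2, … such that for all 0 ≤ j ≤ m, the segment (γ_j, γ_{j+1}, …, γ_m) is a geodesic from γ_j to γ_m (its passage time equals T(γ_j, γ_m)). -/

import Mathlib

open Classical

/-- Vertices of the `d`-dimensional lattice. -/
abbrev Vtx (d : ℕ) := Fin d → ℤ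

/-- ℓ¹-distance on `ℤ^d`. -/
def dist1 {d : ℕ} (x y : Vtx d) : ℤ := ∑ i, |x i - y i|

/-- `e` is a nearest-neighbor (unordered) edge of `ℤ^d`. -/
def IsNNEdge {d : ℕ} (e : Sym2 (Vtx d)) : Prop :=
  ∃ x y : Vtx d, dist1 x y = 1 ∧ e = s(x, y)

/-- Extend a weight function on nearest-neighbor edges to all unordered pairs by `0`. -/
noncomputable def liftW {d : ℕ} (t : {e : Sym2 (Vtx d) // IsNNEdge e} → ℝ)
    (e : Sym2 (Vtx d)) : ℝ :=
  if h : IsNNEdge e then t ⟨e, h⟩ else 0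

/-- `p` is a nearest-neighbor path of `n` steps from `x` to `y`. -/
def IsPath {d : ℕ} (n : ℕ) (p : ℕ → Vtx d) (x y : Vtx d) : Prop :=
  p 0 = x ∧ p n = y ∧ ∀ i : ℕ, i < n → dist1 (p i) (p (i + 1)) = 1

/-- The passage time of the first `n` steps of `p`. -/
def pathTime {d : ℕ} (w : Sym2 (Vtx d) → ℝ) (n : ℕ) (p : ℕ → Vtx d) : ℝ :=
  ∑ i ∈ Finset.range n, w s(p i, p (i + 1))

/-- The (first-)passage time `T(x,y)`. -/
noncomputable def PT {d : ℕ} (w : Sym2 (Vtx d) → ℝ) (x y : Vtx d) : ℝ :=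
  sInf {r : ℝ | ∃ (n : ℕ) (p : ℕ → Vtx d), IsPath n p x y ∧ r = pathTime w n p}

/-- `n·e₁ ∈ ℤ^d`. -/
def nE1 (d : ℕ) (n : ℕ) : Vtx d := fun i => if (i : ℕ) = 0 then (n : ℤ) else 0


lemma dist1_triangle {d : ℕ} (x y z : Vtx d) : dist1 x z ≤ dist1 x y + dist1 y z := by
  unfold dist1
  rw [← Finset.sum_add_distrib]
  exact Finset.sum_le_sum fun i _ => abs_sub_le _ _ _

lemma liftW_nonneg {d : ℕ} (t : {e : Sym2 (Vtx d) // IsNNEdge e} → ℝ) (hnn : ∀ e, 0 ≤ t e)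
    (e : Sym2 (Vtx d)) : 0 ≤ liftW t e := by
  unfold liftW; split
  · exact hnn _
  · exact le_refl 0

lemma pathTime_nonneg {d : ℕ} {w : Sym2 (Vtx d) → ℝ} (hw : ∀ e, 0 ≤ w e) (n : ℕ)
    (p : ℕ → Vtx d) : 0 ≤ pathTime w n p :=
  Finset.sum_nonneg fun i _ => hw _

lemma PT_bddBelow {d : ℕ} {w : Sym2 (Vtx d) → ℝ} (hw : ∀ e, 0 ≤ w e) (x y : Vtx d) :
    BddBelow {r : ℝ | ∃ (n : ℕ) (p : ℕ → Vtx d), IsPath n p x y ∧ r = pathTime w n p} := by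
  refine ⟨0, fun r hr => ?_⟩
  obtain ⟨n, p, _, rfl⟩ := hr
  exact pathTime_nonneg hw n p

lemma PT_le_pathTime {d : ℕ} {w : Sym2 (Vtx d) → ℝ} (hw : ∀ e, 0 ≤ w e)
    {n : ℕ} {p : ℕ → Vtx d} {x y : Vtx d} (hp : IsPath n p x y) :
    PT w x y ≤ pathTime w n p :=
  csInf_le (PT_bddBelow hw x y) ⟨n, p, hp, rfl⟩

lemma path_pos_bound {d : ℕ} {M : ℕ} {p : ℕ → Vtx d} {x z : Vtx d}
    (hp : IsPath M p x z) : ∀ i, i ≤ M → dist1 x (p i) ≤ i := by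
  intro i
  induction i with
  | zero => intro _; rw [hp.1]; simp [dist1]
  | succ i ih =>
    intro h
    calc dist1 x (p (i+1)) ≤ dist1 x (p i) + dist1 (p i) (p (i+1)) := dist1_triangle _ _ _
    _ ≤ i + 1 := by
        rw [hp.2.2 i (by omega)]
        have := ih (by omega); push_cast; linarith

-- concatenation
def cat {d : ℕ} (a : ℕ) (p q : ℕ → Vtx d) (i : ℕ) : Vtx d := if i < a then p i else q (i - a)

lemma cat_left {d : ℕ} {a : ℕ} {p q : ℕ → Vtx d} (hpq : p a = q 0) {i : ℕ} (h : i ≤ a) :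
    cat a p q i = p i := by
  unfold cat
  rcases lt_or_eq_of_le h with h' | h'
  · rw [if_pos h']
  · subst h'; simp [hpq]

lemma cat_right {d : ℕ} {a : ℕ} {p q : ℕ → Vtx d} {i : ℕ} (h : a ≤ i) :
    cat a p q i = q (i - a) := by
  unfold cat; rw [if_neg (by omega)]

lemma isPath_cat {d : ℕ} {a b : ℕ} {p q : ℕ → Vtx d} {x y z : Vtx d}
    (hp : IsPath a p x y) (hq : IsPath b q y z) : IsPath (a + b) (cat a p q) x z := by
  have hpq : p a = q 0 := by rw [hp.2.1, hq.1]
  refine ⟨by rw [cat_left hpq (Nat.zero_le a), hp.1], ?_, ?_⟩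
  · rw [cat_right (Nat.le_add_right a b), Nat.add_sub_cancel_left, hq.2.1]
  · intro i hi
    rcases lt_or_ge i a with h | h
    · rcases lt_or_eq_of_le (Nat.succ_le_of_lt h) with h' | h'
      · rw [cat_left hpq h.le, cat_left hpq (by omega)]
        exact hp.2.2 i h
      · rw [cat_left hpq h.le, cat_left hpq (by omega)]
        exact hp.2.2 i h
    · rw [cat_right h, cat_right (by omega), show i + 1 - a = (i - a) + 1 by omega]
      exact hq.2.2 (i - a) (by omega)

lemma pathTime_cat {d : ℕ} (w : Sym2 (Vtx d) → ℝ) {a b : ℕ} {p q : ℕ → Vtx d}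
    (hpq : p a = q 0) :
    pathTime w (a + b) (cat a p q) = pathTime w a p + pathTime w b q := by
  unfold pathTime
  rw [Finset.sum_range_add]
  congr 1
  · refine Finset.sum_congr rfl fun i hi => ?_
    rw [Finset.mem_range] at hi
    rw [cat_left hpq hi.le, cat_left hpq (by omega)]
  · refine Finset.sum_congr rfl fun i _ => ?_
    rw [cat_right (Nat.le_add_right a i), cat_right (by omega),
      show a + i - a = i by omega, show a + i + 1 - a = i + 1 by omega]

lemma isPath_prefix {d : ℕ} {M : ℕ} {p : ℕ → Vtx d} {x z : Vtx d} (hp : IsPath M p x z)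
    {j : ℕ} (hj : j ≤ M) : IsPath j p x (p j) :=
  ⟨hp.1, rfl, fun i hi => hp.2.2 i (by omega)⟩

lemma isPath_shift {d : ℕ} {M : ℕ} {p : ℕ → Vtx d} {x z : Vtx d} (hp : IsPath M p x z)
    {j m : ℕ} (hjm : j ≤ m) (hmM : m ≤ M) :
    IsPath (m - j) (fun i => p (j + i)) (p j) (p m) := by
  refine ⟨by simp, ?_, fun i hi => ?_⟩
  · show p (j + (m - j)) = p m
    rw [Nat.add_sub_cancel' hjm]
  · show dist1 (p (j + i)) (p (j + (i + 1))) = 1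
    rw [show j + (i + 1) = (j + i) + 1 by omega]
    exact hp.2.2 (j + i) (by omega)

lemma pathTime_shift {d : ℕ} (w : Sym2 (Vtx d) → ℝ) (p : ℕ → Vtx d) {j m : ℕ} (hjm : j ≤ m) :
    pathTime w (m - j) (fun i => p (j + i)) = ∑ i ∈ Finset.Ico j m, w s(p i, p (i + 1)) := by
  rw [Finset.sum_Ico_eq_sum_range]
  refine Finset.sum_congr rfl fun i _ => ?_
  show w s(p (j + i), p (j + i + 1)) = w s(p (j + i), p (j + i + 1))
  rfl

/-- Segments of geodesics are geodesics. -/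
lemma seg_geodesic {d : ℕ} {w : Sym2 (Vtx d) → ℝ} (hw : ∀ e, 0 ≤ w e) {M : ℕ}
    {p : ℕ → Vtx d} {x z : Vtx d} (hp : IsPath M p x z)
    (hge : pathTime w M p = PT w x z) {j m : ℕ} (hjm : j ≤ m) (hmM : m ≤ M) :
    (∑ i ∈ Finset.Ico j m, w s(p i, p (i + 1))) = PT w (p j) (p m) := by
  have hq := isPath_shift hp hjm hmM
  have hqt := pathTime_shift w p hjm
  have hmem : (∑ i ∈ Finset.Ico j m, w s(p i, p (i + 1))) ∈
      {r : ℝ | ∃ (n : ℕ) (q : ℕ → Vtx d), IsPath n q (p j) (p m) ∧ r = pathTime w n q} :=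
    ⟨m - j, _, hq, hqt.symm⟩
  refine le_antisymm ?_ (csInf_le (PT_bddBelow hw _ _) hmem)
  refine le_csInf ⟨_, hmem⟩ ?_
  rintro r ⟨k, q', hq', rfl⟩
  -- suffix path
  have hsuf : IsPath (M - m) (fun i => p (m + i)) (p m) z := by
    have := isPath_shift hp hmM (le_refl M)
    rwa [hp.2.1] at this
  have hQ : IsPath (k + (M - m)) (cat k q' (fun i => p (m + i))) (p j) z :=
    isPath_cat hq' hsuf
  have hR : IsPath (j + (k + (M - m))) (cat j p (cat k q' (fun i => p (m + i)))) x z :=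
    isPath_cat (isPath_prefix hp (by omega)) hQ
  have hRt : pathTime w (j + (k + (M - m))) (cat j p (cat k q' (fun i => p (m + i)))) =
      pathTime w j p + (pathTime w k q' + pathTime w (M - m) (fun i => p (m + i))) := by
    rw [pathTime_cat w hQ.1.symm, pathTime_cat w
      (show q' k = (fun i => p (m + i)) 0 by show q' k = p (m + 0); rw [Nat.add_zero]; exact hq'.2.1)]
  have hPTle : PT w x z ≤ pathTime w j p + (pathTime w k q' + pathTime w (M-m) (fun i => p (m+i))) := by
    rw [← hRt]; exact PT_le_pathTime hw hR
  have hC : pathTime w (M-m) (fun i => p (m+i)) = ∑ i ∈ Finset.Ico m M, w s(p i, p (i+1)) :=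
    pathTime_shift w p hmM
  have e1 : pathTime w M p = pathTime w j p + ∑ i ∈ Finset.Ico j M, w s(p i, p (i+1)) := by
    unfold pathTime
    rw [Finset.range_eq_Ico, Finset.range_eq_Ico]
    exact (Finset.sum_Ico_consecutive (fun i => w s(p i, p (i+1))) (Nat.zero_le j)
      (hjm.trans hmM)).symm
  have e2 : (∑ i ∈ Finset.Ico j m, w s(p i, p (i+1))) + ∑ i ∈ Finset.Ico m M, w s(p i, p (i+1))
      = ∑ i ∈ Finset.Ico j M, w s(p i, p (i+1)) :=
    Finset.sum_Ico_consecutive _ hjm hmM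
  have := hge
  rw [e1, ← e2] at this
  rw [hC] at hPTle
  linarith

lemma ultra_pick {α : Type*} (U : Ultrafilter ℕ) (f : ℕ → α) (s : Finset α)
    (h : {n | f n ∈ s} ∈ U) : ∃ a, {n | f n = a} ∈ U := by
  classical
  induction s using Finset.induction_on with
  | empty =>
    exfalso
    have he : {n | f n ∈ (∅ : Finset α)} = (∅ : Set ℕ) := by simp
    rw [he] at h
    exact Filter.empty_notMem (U : Filter ℕ) h
  | @insert a s _ ih =>
    have he : {n | f n ∈ insert a s} = {n | f n = a} ∪ {n | f n ∈ s} := by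
      ext n; simp [Finset.mem_insert]
    rw [he, Ultrafilter.union_mem_iff] at h
    rcases h with h | h
    · exact ⟨a, h⟩
    · exact ih h

lemma dist1_zero_nE1 {d : ℕ} (hd : 1 ≤ d) (n : ℕ) : dist1 (0 : Vtx d) (nE1 d n) = n := by
  unfold dist1 nE1
  have key : ∀ i : Fin d, |(0 : Vtx d) i - (if (i : ℕ) = 0 then (n : ℤ) else 0)| =
      if i = (⟨0, hd⟩ : Fin d) then (n : ℤ) else 0 := by
    intro i
    by_cases h : (i : ℕ) = 0
    · rw [if_pos h, if_pos (Fin.ext h)]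
      simp
    · rw [if_neg h, if_neg (fun hc => h (by rw [hc]))]
      simp
  rw [Finset.sum_congr rfl fun i _ => key i, Finset.sum_ite_eq' Finset.univ _ (fun _ => (n : ℤ)),
    if_pos (Finset.mem_univ _)]

/-- if for every `n ≥ 1` there is a self-avoiding geodesic from `0` to
`n·e₁`, then there is an infinite self-avoiding geodesic ray from `0`: all of its finite
segments are geodesics between their endpoints. -/
theorem stmt16 (d : ℕ) (hd : 1 ≤ d)
    (t : {e : Sym2 (Vtx d) // IsNNEdge e} → ℝ) (hnn : ∀ e, 0 ≤ t e)
    (hgeo : ∀ n : ℕ, 1 ≤ n → ∃ (m : ℕ) (p : ℕ → Vtx d),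
      IsPath m p 0 (nE1 d n) ∧
      (∀ i j : ℕ, i ≤ m → j ≤ m → p i = p j → i = j) ∧
      pathTime (liftW t) m p = PT (liftW t) 0 (nE1 d n)) :
    ∃ γ : ℕ → Vtx d, γ 0 = 0 ∧ (∀ i : ℕ, dist1 (γ i) (γ (i + 1)) = 1) ∧
      Function.Injective γ ∧
      ∀ j m : ℕ, j ≤ m →
        (∑ i ∈ Finset.Ico j m, liftW t s(γ i, γ (i + 1))) = PT (liftW t) (γ j) (γ m) := by
  classical
  have hw : ∀ e, 0 ≤ liftW t e := liftW_nonneg t hnn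
  have H : ∀ n : ℕ, ∃ (m : ℕ) (p : ℕ → Vtx d),
      IsPath m p 0 (nE1 d (n + 1)) ∧
      (∀ i j : ℕ, i ≤ m → j ≤ m → p i = p j → i = j) ∧
      pathTime (liftW t) m p = PT (liftW t) 0 (nE1 d (n + 1)) :=
    fun n => hgeo (n + 1) (by omega)
  choose M P hP hinj hgd using H
  have hM : ∀ n, n < M n := by
    intro n
    have hb := path_pos_bound (hP n) (M n) le_rfl
    rw [(hP n).2.1, dist1_zero_nE1 hd (n + 1)] at hb
    have h2 : (n + 1 : ℕ) ≤ M n := by exact_mod_cast hb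
    omega
  set U : Ultrafilter ℕ := Filter.hyperfilter ℕ with hU
  have htail : ∀ k : ℕ, {n : ℕ | k ≤ n} ∈ U := by
    intro k
    apply Filter.hyperfilter_le_cofinite
    rw [Filter.mem_cofinite]
    have he : {n : ℕ | k ≤ n}ᶜ = Set.Iio k := by ext n; simp [not_le]
    rw [he]
    exact Set.finite_Iio k
  have hball : ∀ i n : ℕ, i ≤ n →
      P n i ∈ (Fintype.piFinset fun _ : Fin d => Finset.Icc (-(i : ℤ)) i) := by
    intro i n hin
    have hb := path_pos_bound (hP n) i (by have := hM n; omega)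
    rw [Fintype.mem_piFinset]
    intro a
    rw [Finset.mem_Icc, ← abs_le]
    have h1 : |(0 : Vtx d) a - P n i a| ≤ dist1 0 (P n i) := by
      unfold dist1
      exact Finset.single_le_sum (f := fun j => |(0 : Vtx d) j - P n i j|) (fun j _ => abs_nonneg _) (Finset.mem_univ a)
    simp only [Pi.zero_apply, zero_sub, abs_neg] at h1
    exact h1.trans hb
  have hsel : ∀ i : ℕ, ∃ v : Vtx d, {n : ℕ | P n i = v} ∈ U := by
    intro i
    apply ultra_pick U (fun n => P n i) (Fintype.piFinset fun _ : Fin d => Finset.Icc (-(i : ℤ)) i)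
    exact Filter.mem_of_superset (htail i) fun n hn => hball i n hn
  choose γ hγ using hsel
  have hagree : ∀ K : ℕ, ∃ n : ℕ, K ≤ n ∧ ∀ i, i ≤ K → P n i = γ i := by
    intro K
    have hmem : ({n : ℕ | K ≤ n} ∩ ⋂ i ∈ Finset.range (K + 1), {n | P n i = γ i}) ∈ U := by
      refine Filter.inter_mem (htail K) ?_
      rw [Filter.biInter_finset_mem]
      exact fun i _ => hγ i
    obtain ⟨n, hn⟩ := Filter.nonempty_of_mem hmem
    refine ⟨n, hn.1, fun i hi => ?_⟩
    have h2 := hn.2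
    simp only [Set.mem_iInter] at h2
    exact h2 i (Finset.mem_range.2 (by omega))
  refine ⟨γ, ?_, ?_, ?_, ?_⟩
  · obtain ⟨n, -, h⟩ := hagree 0
    rw [← h 0 le_rfl, (hP n).1]
  · intro i
    obtain ⟨n, hn, h⟩ := hagree (i + 1)
    rw [← h i (by omega), ← h (i + 1) le_rfl]
    exact (hP n).2.2 i (by have := hM n; omega)
  · intro a b hab
    rcases le_total a b with h | h
    · obtain ⟨n, hn, hag⟩ := hagree b
      exact hinj n a b (by have := hM n; omega) (by have := hM n; omega)
        (by rw [hag a h, hag b le_rfl, hab])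
    · obtain ⟨n, hn, hag⟩ := hagree a
      exact (hinj n b a (by have := hM n; omega) (by have := hM n; omega)
        (by rw [hag b h, hag a le_rfl, hab])).symm
  · intro j m hjm
    obtain ⟨n, hn, hag⟩ := hagree m
    have hseg := seg_geodesic hw (hP n) (hgd n) hjm (show m ≤ M n by have := hM n; omega)
    have hsum : (∑ i ∈ Finset.Ico j m, liftW t s(γ i, γ (i + 1))) =
        ∑ i ∈ Finset.Ico j m, liftW t s(P n i, P n (i + 1)) := by
      refine Finset.sum_congr rfl fun i hi => ?_
      rw [Finset.mem_Ico] at hi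
      rw [← hag i (by omega), ← hag (i + 1) (by omega)]
    rw [hsum, hseg, hag j hjm, hag m le_rfl]
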